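/- Let V be a finite-dimensional complex vector space, b a nondegenerate symmetric bilinear form on V, d : V → V a linear map with d∘d = 0, and let e : V → V be the b-transpose of d, i.e. b(dx, y) = b(x, ey) for all x, y (so also e∘e = 0). If the Laplacian Δ := d∘e + e∘d is bijective, then the direct sum decomposition V = range d ⊕ range e is b-orthogonal, i.e. b(dx, ey) = 0 for all x, y ∈ V, and the restrictions of b to range d and to range e are both nondegenerate. -/
import Mathlib


/-- If `e` is the `b`-transpose of `d`, `d∘d = 0` and the Laplacian
`d∘e + e∘d` is bijective, then the decomposition `V = range d ⊕ range e` is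
`b`-orthogonal and `b` restricts nondegenerately to both summands. -/
theorem hodge_decomposition_b_orthogonal
    {V : Type*} [AddCommGroup V] [Module ℂ V] [FiniteDimensional ℂ V]
    (b : LinearMap.BilinForm ℂ V) (hsymm : ∀ x y, b x y = b y x)
    (hnd : ∀ x, (∀ y, b x y = 0) → x = 0)
    (d e : V →ₗ[ℂ] V) (hdd : d ∘ₗ d = 0)
    (htrans : ∀ x y, b (d x) y = b x (e y))
    (hΔ : Function.Bijective (d ∘ₗ e + e ∘ₗ d)) :
    (∀ x y, b (d x) (e y) = 0) ∧
    (∀ x ∈ LinearMap.range d, (∀ y ∈ LinearMap.range d, b x y = 0) → x = 0) ∧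
    (∀ x ∈ LinearMap.range e, (∀ y ∈ LinearMap.range e, b x y = 0) → x = 0) := by
  have hee : ∀ y, e (e y) = 0 := by
    intro y
    apply hnd
    intro x
    rw [hsymm, ← htrans, ← htrans]
    have : d (d x) = 0 := by
      have := congrFun (congrArg DFunLike.coe hdd) x
      simpa using this
    rw [this]
    simp
  have horth : ∀ x y, b (d x) (e y) = 0 := by
    intro x y
    rw [htrans, hee]
    simp
  refine ⟨horth, ?_, ?_⟩
  · rintro x ⟨x', rfl⟩ h
    apply hnd
    intro v
    obtain ⟨w, rfl⟩ := hΔ.surjective v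
    simp only [LinearMap.add_apply, LinearMap.comp_apply, map_add]
    rw [h _ ⟨e w, rfl⟩, horth]
    simp
  · rintro x ⟨x', rfl⟩ h
    apply hnd
    intro v
    obtain ⟨w, rfl⟩ := hΔ.surjective v
    simp only [LinearMap.add_apply, LinearMap.comp_apply, map_add]
    rw [h _ ⟨d w, rfl⟩, hsymm (e x') (d (e w)), horth]
    simp
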